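/- For every integer n ≥ 5, T(n, 3) = n + 1, i.e. the maximum size of an equireplicate binary code of length n with diameter at most 3 is exactly n + 1. -/

import Mathlib

/-- A binary code `C ⊆ F_2^n` is equireplicate if the number of codewords having a `1`
in coordinate `i` is the same for all coordinates `i`. -/
def Equireplicate (n : ℕ) (C : Finset (Fin n → ZMod 2)) : Prop :=
  ∃ r : ℕ, ∀ i : Fin n, (C.filter fun x => x i = 1).card = r

/-- The set of sizes of equireplicate binary codes of length `n`
with diameter at most `w`; `T(n,w)` is its greatest element. -/
def equireplicateCodeSizes (n w : ℕ) : Set ℕ :=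
  {M | ∃ C : Finset (Fin n → ZMod 2),
    Equireplicate n C ∧ (∀ x ∈ C, ∀ y ∈ C, hammingDist x y ≤ w) ∧ C.card = M}

open scoped symmDiff

variable {α : Type*} [DecidableEq α]

lemma sd_card (a b : Finset α) : (a ∆ b).card = (a \ b).card + (b \ a).card := by
  rw [symmDiff_def, Finset.sup_eq_union, Finset.card_union_of_disjoint (disjoint_sdiff_sdiff)]

lemma sd_tri (a b c : Finset α) : (a ∆ c).card ≤ (a ∆ b).card + (b ∆ c).card := by
  have h : a ∆ c = (a ∆ b) ∆ (b ∆ c) := by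
    rw [symmDiff_assoc, symmDiff_symmDiff_cancel_left]
  rw [h]
  calc ((a ∆ b) ∆ (b ∆ c)).card ≤ ((a ∆ b) ∪ (b ∆ c)).card :=
        Finset.card_le_card (by
          intro x hx
          have := symmDiff_le_sup (a := a ∆ b) (b := b ∆ c)
          exact this hx)
    _ ≤ _ := Finset.card_union_le _ _

lemma sd_single_mem {a : Finset α} {x : α} (h : x ∈ a) : (a ∆ ({x} : Finset α)).card + 1 = a.card := by
  have : a ∆ ({x} : Finset α) = a.erase x := by
    ext y
    simp only [Finset.mem_symmDiff, Finset.mem_singleton, Finset.mem_erase]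
    constructor
    · rintro (⟨hy, hne⟩ | ⟨rfl, hna⟩)
      · exact ⟨hne, hy⟩
      · exact absurd h hna
    · rintro ⟨hne, hy⟩; exact Or.inl ⟨hy, hne⟩
  rw [this, Finset.card_erase_add_one h]

lemma sd_single_not_mem {a : Finset α} {x : α} (h : x ∉ a) : (a ∆ ({x} : Finset α)).card = a.card + 1 := by
  have : a ∆ ({x} : Finset α) = insert x a := by
    ext y
    simp only [Finset.mem_symmDiff, Finset.mem_singleton, Finset.mem_insert]
    constructor
    · rintro (⟨hy, _⟩ | ⟨rfl, _⟩)
      · exact Or.inr hy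
      · exact Or.inl rfl
    · rintro (rfl | hy)
      · exact Or.inr ⟨rfl, h⟩
      · exact Or.inl ⟨hy, fun hxy => h (hxy ▸ hy)⟩
  rw [this, Finset.card_insert_of_notMem h]

lemma card_le_one_cases {s : Finset α} (h : s.card ≤ 1) : s = ∅ ∨ ∃ u, s = {u} := by
  interval_cases h' : s.card
  · exact Or.inl (Finset.card_eq_zero.mp h')
  · exact Or.inr (Finset.card_eq_one.mp h')

lemma lemU {a1 a2 x : Finset α} (h12 : (a1 ∆ a2).card = 1)
    (h1 : (x ∆ a1).card ≤ 1) (h2 : (x ∆ a2).card ≤ 1) : x = a1 ∨ x = a2 := by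
  obtain ⟨q, hq⟩ := Finset.card_eq_one.mp h12
  rcases card_le_one_cases h1 with h | ⟨u, hu⟩
  · left; exact symmDiff_eq_bot.mp h
  · right
    have hx : x = a1 ∆ {u} := by
      rw [← hu, symmDiff_comm x a1, symmDiff_symmDiff_cancel_left]
    have hxa2 : x ∆ a2 = {u} ∆ {q} := by
      rw [hx, symmDiff_comm a1 ({u} : Finset α), symmDiff_assoc, hq]
    by_cases huq : u = q
    · subst huq
      rw [hx, ← hq, symmDiff_symmDiff_cancel_left]
    · exfalso
      have : ({u} ∆ {q} : Finset α).card = 2 := by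
        have hd : Disjoint ({u} : Finset α) {q} := by simp [Finset.disjoint_singleton_left, huq, Ne.symm huq]
        rw [hd.symmDiff_eq_sup]
        simp [Finset.card_union_of_disjoint hd, Finset.card_pair huq]
      rw [hxa2] at h2; omega

lemma lemV {t : ℕ} {a1 a2 b1 b2 : Finset α}
    (wa1 : t ≤ a1.card + 2) (wa1' : a1.card + 1 ≤ t)
    (wa2 : t ≤ a2.card + 2) (wa2' : a2.card + 1 ≤ t)
    (wb1 : t ≤ b1.card + 2) (wb1' : b1.card + 1 ≤ t)
    (wb2 : t ≤ b2.card + 2) (wb2' : b2.card + 1 ≤ t)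
    (ha : a1 ≠ a2) (hb : b1 ≠ b2)
    (h11 : (a1 ∆ b1).card ≤ 1) (h12 : (a1 ∆ b2).card ≤ 1)
    (h21 : (a2 ∆ b1).card ≤ 1) (h22 : (a2 ∆ b2).card ≤ 1) :
    (a1 ∆ a2).card = 1 ∧ (b1 = a1 ∨ b1 = a2) ∧ (b2 = a1 ∨ b2 = a2) := by
  have htri : (a1 ∆ a2).card ≤ (a1 ∆ b1).card + (b1 ∆ a2).card := sd_tri a1 b1 a2
  have hc21 : (b1 ∆ a2).card = (a2 ∆ b1).card := by rw [symmDiff_comm]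
  have hne : (a1 ∆ a2).card ≠ 0 := by
    intro h
    exact ha (symmDiff_eq_bot.mp (Finset.card_eq_zero.mp h))
  have hcase : (a1 ∆ a2).card = 1 ∨ (a1 ∆ a2).card = 2 := by omega
  rcases hcase with h1 | h2
  · refine ⟨h1, ?_, ?_⟩
    · exact lemU h1 (by rwa [symmDiff_comm]) (by rw [symmDiff_comm]; exact h21)
    · exact lemU h1 (by rwa [symmDiff_comm]) (by rw [symmDiff_comm]; exact h22)
  · exfalso
    have e11 : (a1 ∆ b1).card = 1 := by omega
    have e21 : (a2 ∆ b1).card = 1 := by omega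
    have htri2 : (a1 ∆ a2).card ≤ (a1 ∆ b2).card + (b2 ∆ a2).card := sd_tri a1 b2 a2
    have hc22 : (b2 ∆ a2).card = (a2 ∆ b2).card := by rw [symmDiff_comm]
    have e12 : (a1 ∆ b2).card = 1 := by omega
    obtain ⟨x1, hx1⟩ := Finset.card_eq_one.mp e11
    obtain ⟨x2, hx2⟩ := Finset.card_eq_one.mp e12
    have hb1 : b1 = a1 ∆ {x1} := by rw [← hx1, symmDiff_symmDiff_cancel_left]
    have hb2 : b2 = a1 ∆ {x2} := by rw [← hx2, symmDiff_symmDiff_cancel_left]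
    have hx12 : x1 ≠ x2 := by
      rintro rfl; exact hb (hb1.trans hb2.symm)
    -- a1 ∆ a2 = {x1, x2}
    have hx1mem : x1 ∈ a1 ∆ a2 := by
      have h1' : a1 ∆ a2 = {x1} ∆ (b1 ∆ a2) := by
        rw [← hx1, symmDiff_assoc, symmDiff_symmDiff_cancel_left]
      obtain ⟨z, hz⟩ := Finset.card_eq_one.mp (hc21.trans e21)
      have hxz : x1 ≠ z := by
        rintro rfl
        rw [h1', hz, symmDiff_self] at h2
        simp at h2
      rw [h1', hz]
      simp [Finset.mem_symmDiff, hxz]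
    have hx2mem : x2 ∈ a1 ∆ a2 := by
      have h1' : a1 ∆ a2 = {x2} ∆ (b2 ∆ a2) := by
        rw [← hx2, symmDiff_assoc, symmDiff_symmDiff_cancel_left]
      obtain ⟨z, hz⟩ := Finset.card_eq_one.mp (hc22.trans (by omega : (a2 ∆ b2).card = 1))
      have hxz : x2 ≠ z := by
        rintro rfl
        rw [h1', hz, symmDiff_self] at h2
        simp at h2
      rw [h1', hz]
      simp [Finset.mem_symmDiff, hxz]
    have hsub : ({x1, x2} : Finset α) ⊆ a1 ∆ a2 := by
      intro y hy
      simp only [Finset.mem_insert, Finset.mem_singleton] at hy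
      rcases hy with rfl | rfl
      · exact hx1mem
      · exact hx2mem
    have hcard12 : ({x1, x2} : Finset α).card = 2 := by
      rw [Finset.card_insert_of_notMem (by simpa using hx12), Finset.card_singleton]
    have heq : a1 ∆ a2 = {x1, x2} := (Finset.eq_of_subset_of_card_le hsub (by omega)).symm
    have ha2 : a2 = b1 ∆ {x2} := by
      have : a2 = a1 ∆ (a1 ∆ a2) := (symmDiff_symmDiff_cancel_left a1 a2).symm
      rw [heq] at this
      have hpair : ({x1, x2} : Finset α) = {x1} ∆ {x2} := by
        ext y
        simp only [Finset.mem_symmDiff, Finset.mem_singleton, Finset.mem_insert]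
        constructor
        · rintro (rfl | rfl)
          · exact Or.inl ⟨rfl, hx12⟩
          · exact Or.inr ⟨rfl, Ne.symm hx12⟩
        · rintro (⟨rfl, _⟩ | ⟨rfl, _⟩) <;> simp
      rw [hpair, ← symmDiff_assoc, ← hb1] at this
      exact this
    have hx2b1 : x2 ∈ b1 ↔ x2 ∈ a1 := by
      rw [hb1]
      simp [Finset.mem_symmDiff, hx12, Ne.symm hx12]
    have c1 : (x1 ∈ a1 → b1.card + 1 = a1.card) ∧ (x1 ∉ a1 → b1.card = a1.card + 1) := by
      constructor
      · intro m; rw [hb1]; exact sd_single_mem m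
      · intro m; rw [hb1]; exact sd_single_not_mem m
    have c2 : (x2 ∈ a1 → b2.card + 1 = a1.card) ∧ (x2 ∉ a1 → b2.card = a1.card + 1) := by
      constructor
      · intro m; rw [hb2]; exact sd_single_mem m
      · intro m; rw [hb2]; exact sd_single_not_mem m
    have c3 : (x2 ∈ a1 → a2.card + 1 = b1.card) ∧ (x2 ∉ a1 → a2.card = b1.card + 1) := by
      constructor
      · intro m; rw [ha2]; exact sd_single_mem (hx2b1.mpr m)
      · intro m; rw [ha2]; exact sd_single_not_mem (fun hm => m (hx2b1.mp hm))
    by_cases m1 : x1 ∈ a1 <;> by_cases m2 : x2 ∈ a1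
    · have := c1.1 m1; have := c3.1 m2; omega
    · have := c1.1 m1; have := c2.2 m2; omega
    · have := c1.2 m1; have := c2.1 m2; omega
    · have := c1.2 m1; have := c3.2 m2; omega

section Main

variable {n : ℕ}

/-- number of sets in `E` containing `i` -/
private def cnt (E : Finset (Finset (Fin n))) (i : Fin n) : ℕ :=
  (E.filter fun A => i ∈ A).card


lemma final_count (hn : 5 ≤ n) (E : Finset (Finset (Fin n)))
    (hempty : ∅ ∈ E)
    (hdist : ∀ A ∈ E, ∀ B ∈ E, (A ∆ B).card ≤ 3)
    (hge : ∀ i : Fin n, 2 ≤ cnt E i)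
    (htv : ∀ i j : Fin n, cnt E i = cnt E j ∨ cnt E i + cnt E j = E.card)
    (T : Finset (Fin n)) (ht2 : 2 ≤ T.card) (ht3 : T.card ≤ 3)
    (u : Finset (Fin n)) (q : Fin n) (hu : u ⊆ T) (hqT : q ∈ T) (hqu : q ∉ u)
    (hucard : T.card = u.card + 2)
    (hfilter : ∀ c : Fin n, c ∉ T →
      E.filter (fun A => c ∈ A) = {insert c u, insert c (insert q u)}) :
    False := by
  classical
  set v : Finset (Fin n) := insert q u with hv
  have hvT : v ⊆ T := Finset.insert_subset hqT hu
  have hvcard : v.card = u.card + 1 := Finset.card_insert_of_notMem hqu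
  have hocard : Tᶜ.card = n - T.card := by
    rw [Finset.card_compl, Fintype.card_fin]
  have ho2 : 2 ≤ Tᶜ.card := by omega
  -- distinctness of the two sets at any outside column
  have hne_ins : ∀ c : Fin n, c ∉ T → insert c u ≠ insert c v := by
    intro c hc heq
    have : q ∈ insert c u := heq ▸ Finset.mem_insert_of_mem (Finset.mem_insert_self q u)
    rcases Finset.mem_insert.mp this with h | h
    · exact hc (h ▸ hqT)
    · exact hqu h
  have hmem_ins : ∀ c : Fin n, c ∉ T → insert c u ∈ E ∧ insert c v ∈ E := by
    intro c hc
    have h1 : insert c u ∈ E.filter (fun A => c ∈ A) := by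
      rw [hfilter c hc]; simp
    have h2 : insert c v ∈ E.filter (fun A => c ∈ A) := by
      rw [hfilter c hc]; simp
    exact ⟨(Finset.mem_filter.mp h1).1, (Finset.mem_filter.mp h2).1⟩
  have hcnt_out : ∀ c : Fin n, c ∉ T → cnt E c = 2 := by
    intro c hc
    rw [cnt, hfilter c hc]
    rw [Finset.card_insert_of_notMem (by simpa using hne_ins c hc), Finset.card_singleton]
  -- splitting E
  set ET : Finset (Finset (Fin n)) := E.filter (fun A => A ⊆ T) with hET
  have hsplit : ET.card + (E.filter (fun A => ¬ A ⊆ T)).card = E.card :=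
    Finset.card_filter_add_card_filter_not _
  have hout_eq : E.filter (fun A => ¬ A ⊆ T) = Tᶜ.biUnion (fun c => {insert c u, insert c v}) := by
    ext A
    simp only [Finset.mem_filter, Finset.mem_biUnion, Finset.mem_compl, Finset.mem_insert,
      Finset.mem_singleton]
    constructor
    · rintro ⟨hA, hnsub⟩
      obtain ⟨c, hcA, hcT⟩ : ∃ c, c ∈ A ∧ c ∉ T := by
        by_contra h
        push_neg at h
        exact hnsub h
      have : A ∈ E.filter (fun B => c ∈ B) := Finset.mem_filter.mpr ⟨hA, hcA⟩
      rw [hfilter c hcT] at this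
      simp only [Finset.mem_insert, Finset.mem_singleton] at this
      exact ⟨c, hcT, this⟩
    · rintro ⟨c, hcT, rfl | rfl⟩
      · exact ⟨(hmem_ins c hcT).1, fun hsub => hcT (hsub (Finset.mem_insert_self c u))⟩
      · exact ⟨(hmem_ins c hcT).2, fun hsub => hcT (hsub (Finset.mem_insert_self c v))⟩
  have hout_card : (E.filter (fun A => ¬ A ⊆ T)).card = 2 * Tᶜ.card := by
    rw [hout_eq]
    rw [Finset.card_biUnion]
    · rw [Finset.sum_congr rfl (fun c hc => ?_), Finset.sum_const, smul_eq_mul, mul_comm]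
      rw [Finset.card_insert_of_notMem (by simpa using hne_ins c (Finset.mem_compl.mp hc)),
        Finset.card_singleton]
    · intro c hc c' hc' hcc'
      simp only [Finset.disjoint_left, Finset.mem_insert, Finset.mem_singleton]
      rintro A (rfl | rfl) (h | h) <;>
      · exfalso
        have hcmem : c ∈ insert c' u ∨ c ∈ insert c' v := by
          rw [← h]; simp
        rcases hcmem with hm | hm <;>
        · rcases Finset.mem_insert.mp hm with h' | h'
          · exact hcc' h'
          · first
            | exact (Finset.mem_compl.mp hc) (hu h')
            | exact (Finset.mem_compl.mp hc) (hvT h')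
  have hMcard : E.card = ET.card + 2 * Tᶜ.card := by omega
  -- count at q
  have hq_eq : E.filter (fun A => q ∈ A) =
      ET.filter (fun A => q ∈ A) ∪ Tᶜ.image (fun c => insert c v) := by
    ext A
    simp only [Finset.mem_filter, Finset.mem_union, Finset.mem_image, Finset.mem_compl, hET,
      Finset.mem_filter]
    constructor
    · rintro ⟨hA, hqA⟩
      by_cases hsub : A ⊆ T
      · exact Or.inl ⟨⟨hA, hsub⟩, hqA⟩
      · obtain ⟨c, hcA, hcT⟩ : ∃ c, c ∈ A ∧ c ∉ T := by
          by_contra h; push_neg at h; exact hsub h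
        have : A ∈ E.filter (fun B => c ∈ B) := Finset.mem_filter.mpr ⟨hA, hcA⟩
        rw [hfilter c hcT] at this
        simp only [Finset.mem_insert, Finset.mem_singleton] at this
        rcases this with rfl | rfl
        · exfalso
          rcases Finset.mem_insert.mp hqA with h' | h'
          · exact hcT (h' ▸ hqT)
          · exact hqu h'
        · exact Or.inr ⟨c, hcT, rfl⟩
    · rintro (⟨⟨hA, _⟩, hqA⟩ | ⟨c, hcT, rfl⟩)
      · exact ⟨hA, hqA⟩
      · exact ⟨(hmem_ins c hcT).2, Finset.mem_insert_of_mem (Finset.mem_insert_self q u)⟩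
  have himg_card : (Tᶜ.image (fun c => insert c v)).card = Tᶜ.card := by
    rw [Finset.card_image_of_injOn]
    intro c hc c' hc' h
    have hcc : c ∈ insert c' v := by
      simp only at h
      rw [← h]
      exact Finset.mem_insert_self c v
    rcases Finset.mem_insert.mp hcc with h' | h'
    · exact h'
    · exact absurd (hvT h') (Finset.mem_compl.mp hc)
  have hdisj_q : Disjoint (ET.filter (fun A => q ∈ A)) (Tᶜ.image (fun c => insert c v)) := by
    simp only [Finset.disjoint_left, Finset.mem_filter, Finset.mem_image, Finset.mem_compl, hET]
    rintro A ⟨⟨_, hsub⟩, _⟩ ⟨c, hcT, rfl⟩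
    exact hcT (hsub (Finset.mem_insert_self c v))
  have hcntq : cnt E q = (ET.filter (fun A => q ∈ A)).card + Tᶜ.card := by
    rw [cnt, hq_eq, Finset.card_union_of_disjoint hdisj_q, himg_card]
  have halpha : (ET.filter (fun A => q ∈ A)).card + 1 ≤ ET.card := by
    have hsub2 : ET.filter (fun A => q ∈ A) ⊆ ET.erase ∅ := by
      intro A hA
      rw [Finset.mem_filter] at hA
      refine Finset.mem_erase.mpr ⟨?_, hA.1⟩
      rintro rfl
      exact absurd hA.2 (Finset.notMem_empty q)
    have hemem : ∅ ∈ ET := Finset.mem_filter.mpr ⟨hempty, Finset.empty_subset T⟩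
    have := Finset.card_le_card hsub2
    rw [Finset.card_erase_of_mem hemem] at this
    have hpos : 1 ≤ ET.card := Finset.card_pos.mpr ⟨∅, hemem⟩
    omega
  -- pick outside column
  obtain ⟨c0, hc0⟩ := Finset.card_pos.mp (by omega : 0 < Tᶜ.card)
  have hc0T : c0 ∉ T := Finset.mem_compl.mp hc0
  have hc0cnt : cnt E c0 = 2 := hcnt_out c0 hc0T
  rcases htv q c0 with heq | hsum
  · -- cnt E q = 2 : forces Tᶜ.card = 2, alpha_q = 0
    rw [hc0cnt] at heq
    have ho_eq : Tᶜ.card = 2 ∧ (ET.filter (fun A => q ∈ A)).card = 0 := by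
      constructor <;> omega
    have ht_eq : T.card = 3 := by omega
    have hn_eq : n = 5 := by omega
    have hu1 : u.card = 1 := by omega
    obtain ⟨p, hp⟩ := Finset.card_eq_one.mp hu1
    have hqnone : ∀ A ∈ ET, q ∉ A := by
      intro A hA hqA
      have : A ∈ ET.filter (fun A => q ∈ A) := Finset.mem_filter.mpr ⟨hA, hqA⟩
      rw [Finset.card_eq_zero.mp ho_eq.2] at this
      exact absurd this (Finset.notMem_empty A)
    -- w : third element of T
    have hTv : (T \ v).card = 1 := by
      rw [Finset.card_sdiff_of_subset hvT]
      omega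
    obtain ⟨w, hw⟩ := Finset.card_eq_one.mp hTv
    have hwT : w ∈ T := (Finset.mem_sdiff.mp (hw ▸ Finset.mem_singleton_self w)).1
    have hwv : w ∉ v := (Finset.mem_sdiff.mp (hw ▸ Finset.mem_singleton_self w)).2
    -- {w} not in E
    have hwE : ({w} : Finset (Fin n)) ∉ E := by
      intro hmem
      have hBe : insert c0 v ∈ E := (hmem_ins c0 hc0T).2
      have hdisj : Disjoint ({w} : Finset (Fin n)) (insert c0 v) := by
        simp only [Finset.disjoint_singleton_left, Finset.mem_insert]
        push_neg
        refine ⟨fun hwc0 => hc0T (hwc0 ▸ hwT), ?_⟩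
        intro hmem2
        exact hwv (Finset.mem_insert.mpr (Finset.mem_insert.mp hmem2))
      have hcard4 : (({w} : Finset (Fin n)) ∆ (insert c0 v)).card = 4 := by
        rw [hdisj.symmDiff_eq_sup]
        rw [Finset.sup_eq_union, Finset.card_union_of_disjoint hdisj, Finset.card_singleton,
          Finset.card_insert_of_notMem (fun h => hc0T (hvT h))]
        omega
      have := hdist _ hmem _ hBe
      omega
    -- cnt E w computation
    have hw_eq : E.filter (fun A => w ∈ A) = ET.filter (fun A => w ∈ A) := by
      ext A
      simp only [Finset.mem_filter, hET]
      constructor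
      · rintro ⟨hA, hwA⟩
        refine ⟨⟨hA, ?_⟩, hwA⟩
        by_contra hsub
        obtain ⟨c, hcA, hcT⟩ : ∃ c, c ∈ A ∧ c ∉ T := by
          by_contra h; push_neg at h; exact hsub h
        have : A ∈ E.filter (fun B => c ∈ B) := Finset.mem_filter.mpr ⟨hA, hcA⟩
        rw [hfilter c hcT] at this
        simp only [Finset.mem_insert, Finset.mem_singleton] at this
        have hwc : w ≠ c := fun h => hcT (h ▸ hwT)
        rcases this with rfl | rfl
        · rcases Finset.mem_insert.mp hwA with h' | h'
          · exact hwc h'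
          · exact hwv (Finset.mem_insert_of_mem h')
        · rcases Finset.mem_insert.mp hwA with h' | h'
          · exact hwc h'
          · exact hwv h'
      · rintro ⟨⟨hA, _⟩, hwA⟩
        exact ⟨hA, hwA⟩
    have hwsub : ET.filter (fun A => w ∈ A) ⊆ {({p, w} : Finset (Fin n))} := by
      intro A hA
      rw [Finset.mem_filter] at hA
      obtain ⟨hAET, hwA⟩ := hA
      have hAE : A ∈ E := (Finset.mem_filter.mp hAET).1
      have hAsub : A ⊆ T := (Finset.mem_filter.mp hAET).2
      have hqA : q ∉ A := hqnone A hAET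
      -- T = {p, q, w}
      have hApw : A ⊆ ({p, w} : Finset (Fin n)) := by
        intro x hxA
        have hxT : x ∈ T := hAsub hxA
        simp only [Finset.mem_insert, Finset.mem_singleton]
        by_contra hxpw
        push_neg at hxpw
        -- x ∈ T, x ≠ p, x ≠ w, x ≠ q → contradiction with T.card = 3
        have hxq : x ≠ q := fun h => hqA (h ▸ hxA)
        have hxv : x ∉ v := by
          simp only [hv, Finset.mem_insert, hp, Finset.mem_singleton]
          push_neg
          exact ⟨hxq, hxpw.1⟩
        have : x ∈ T \ v := Finset.mem_sdiff.mpr ⟨hxT, hxv⟩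
        rw [hw] at this
        exact hxpw.2 (Finset.mem_singleton.mp this)
      have hAne : A ≠ {w} := by
        rintro rfl
        exact hwE hAE
      -- A ∋ w, A ⊆ {p, w}, A ≠ {w} → A = {p, w}
      rw [Finset.mem_singleton]
      apply Finset.Subset.antisymm hApw
      intro x hx
      rcases Finset.mem_insert.mp hx with rfl | hx'
      · -- x = p : must be in A
        by_contra hpA
        apply hAne
        apply Finset.Subset.antisymm
        · intro y hy
          rcases Finset.mem_insert.mp (hApw hy) with rfl | hy'
          · exact absurd hy hpA
          · exact hy'
        · intro y hy
          rw [Finset.mem_singleton.mp hy]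
          exact hwA
      · rw [Finset.mem_singleton.mp hx']
        exact hwA
    have hcntw : cnt E w ≤ 1 := by
      rw [cnt, hw_eq]
      calc (ET.filter (fun A => w ∈ A)).card ≤ ({({p, w} : Finset (Fin n))} : Finset _).card :=
            Finset.card_le_card hwsub
        _ = 1 := Finset.card_singleton _
    exact absurd (hge w) (by omega)
  · -- cnt E q + cnt E c0 = E.card
    rw [hc0cnt, hcntq, hMcard] at hsum
    omega

lemma main_lemma (hn : 5 ≤ n) (E : Finset (Finset (Fin n)))
    (hempty : ∅ ∈ E)
    (hcard : ∀ A ∈ E, A.card ≤ 3)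
    (hdist : ∀ A ∈ E, ∀ B ∈ E, (A ∆ B).card ≤ 3)
    (hge : ∀ i : Fin n, 2 ≤ cnt E i)
    (htv : ∀ i j : Fin n, cnt E i = cnt E j ∨ cnt E i + cnt E j = E.card) :
    False := by
  classical
  -- maximal element T
  obtain ⟨T, hT, hTmax⟩ := E.exists_max_image Finset.card ⟨∅, hempty⟩
  have ht3 : T.card ≤ 3 := hcard T hT
  -- T.card ≥ 2
  have ht2 : 2 ≤ T.card := by
    by_contra h
    push_neg at h
    let i0 : Fin n := ⟨0, by omega⟩
    have h2 : 1 < (E.filter fun A => i0 ∈ A).card := hge i0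
    obtain ⟨A, hA, B, hB, hAB⟩ := Finset.one_lt_card.mp h2
    rw [Finset.mem_filter] at hA hB
    have hsing : ∀ C : Finset (Fin n), C ∈ E → i0 ∈ C → C = {i0} := by
      intro C hC hiC
      have : C.card ≤ 1 := le_trans (hTmax C hC) (by omega)
      exact Finset.eq_singleton_iff_unique_mem.mpr
        ⟨hiC, fun x hx => Finset.card_le_one.mp this x hx i0 hiC⟩
    exact hAB ((hsing A hA.1 hA.2).trans (hsing B hB.1 hB.2).symm)
  -- outside columns
  have hcompl : 2 ≤ Tᶜ.card := by
    rw [Finset.card_compl]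
    simp only [Fintype.card_fin]
    omega
  -- shape: every A in E has at most one element outside T
  have hshape : ∀ A ∈ E, ∀ c ∈ A, c ∉ T → A = insert c (A ∩ T) ∧ c ∉ A ∩ T := by
    intro A hA c hcA hcT
    have hsd1 : (A \ T).card ≤ 1 := by
      by_contra hgt
      push_neg at hgt
      have h1 : (A ∆ T).card = (A \ T).card + (T \ A).card := sd_card A T
      have h2 : (A \ T).card + (A ∩ T).card = A.card := Finset.card_sdiff_add_card_inter A T
      have h3 : (T \ A).card + (T ∩ A).card = T.card := Finset.card_sdiff_add_card_inter T A
      have h4 : (T ∩ A).card = (A ∩ T).card := by rw [Finset.inter_comm]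
      have h5 : A.card ≤ T.card := hTmax A hA
      have h6 := hdist A hA T hT
      omega
    have hAT : A \ T = {c} := by
      have hc : c ∈ A \ T := Finset.mem_sdiff.mpr ⟨hcA, hcT⟩
      exact Finset.eq_singleton_iff_unique_mem.mpr
        ⟨hc, fun x hx => Finset.card_le_one.mp hsd1 x hx c hc⟩
    constructor
    · ext x
      simp only [Finset.mem_insert, Finset.mem_inter]
      constructor
      · intro hx
        by_cases hxT : x ∈ T
        · exact Or.inr ⟨hx, hxT⟩
        · left
          have : x ∈ A \ T := Finset.mem_sdiff.mpr ⟨hx, hxT⟩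
          rw [hAT] at this
          exact Finset.mem_singleton.mp this
      · rintro (rfl | ⟨hx, _⟩) <;> [exact hcA; exact hx]
    · exact fun hmem => hcT (Finset.mem_inter.mp hmem).2
  -- window on trace cards
  have hwin : ∀ A ∈ E, ∀ c ∈ A, c ∉ T →
      T.card ≤ (A ∩ T).card + 2 ∧ (A ∩ T).card + 1 ≤ T.card := by
    intro A hA c hcA hcT
    obtain ⟨hins, hnotm⟩ := hshape A hA c hcA hcT
    have hAcard : A.card = (A ∩ T).card + 1 := by
      have := Finset.card_insert_of_notMem hnotm
      rw [← hins] at this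
      exact this
    have h1 : (A ∆ T).card = (A \ T).card + (T \ A).card := sd_card A T
    have h2 : (A \ T).card + (A ∩ T).card = A.card := Finset.card_sdiff_add_card_inter A T
    have h3 : (T \ A).card + (T ∩ A).card = T.card := Finset.card_sdiff_add_card_inter T A
    have h4 : (T ∩ A).card = (A ∩ T).card := by rw [Finset.inter_comm]
    have h5 : A.card ≤ T.card := hTmax A hA
    have h6 := hdist A hA T hT
    omega
  -- cross lemma
  have hcross : ∀ A ∈ E, ∀ B ∈ E, ∀ c d : Fin n, c ∈ A → d ∈ B → c ∉ T → d ∉ T → c ≠ d →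
      ((A ∩ T) ∆ (B ∩ T)).card ≤ 1 := by
    intro A hA B hB c d hcA hdB hcT hdT hcd
    obtain ⟨hinsA, hnmA⟩ := hshape A hA c hcA hcT
    obtain ⟨hinsB, hnmB⟩ := hshape B hB d hdB hdT
    set a := A ∩ T with ha
    set b := B ∩ T with hb
    have haT : a ⊆ T := Finset.inter_subset_right
    have hbT : b ⊆ T := Finset.inter_subset_right
    have hca : c ∉ a := hnmA
    have hdb : d ∉ b := hnmB
    have hcb : c ∉ b := fun h => hcT (hbT h)
    have hda : d ∉ a := fun h => hdT (haT h)
    have hsd : A ∆ B = insert c (insert d (a ∆ b)) := by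
      rw [hinsA, hinsB]
      ext x
      simp only [Finset.mem_symmDiff, Finset.mem_insert]
      by_cases hxc : x = c
      · subst hxc
        simp [hca, hcb, hcd]
      · by_cases hxd : x = d
        · subst hxd
          simp [hda, hdb, Ne.symm hcd, hxc]
        · simp only [hxc, hxd, false_or]
    have hcnot : c ∉ insert d (a ∆ b) := by
      simp only [Finset.mem_insert, Finset.mem_symmDiff]
      push_neg
      exact ⟨hcd, by tauto, by tauto⟩
    have hdnot : d ∉ a ∆ b := by
      simp only [Finset.mem_symmDiff]
      tauto
    have hcardAB : (A ∆ B).card = (a ∆ b).card + 2 := by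
      rw [hsd, Finset.card_insert_of_notMem hcnot, Finset.card_insert_of_notMem hdnot]
    have := hdist A hA B hB
    omega
  -- two outside columns
  obtain ⟨c0, hc0m, d0, hd0m, hc0d0⟩ := Finset.one_lt_card.mp hcompl
  have hc0T : c0 ∉ T := Finset.mem_compl.mp hc0m
  have hd0T : d0 ∉ T := Finset.mem_compl.mp hd0m
  have htwo : ∀ c : Fin n, c ∉ T →
      ∃ A1, A1 ∈ E ∧ c ∈ A1 ∧ ∃ A2, A2 ∈ E ∧ c ∈ A2 ∧ A1 ∩ T ≠ A2 ∩ T := by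
    intro c hc
    have h2 : 1 < (E.filter fun A => c ∈ A).card := hge c
    obtain ⟨A1, hA1, A2, hA2, h12⟩ := Finset.one_lt_card.mp h2
    rw [Finset.mem_filter] at hA1 hA2
    refine ⟨A1, hA1.1, hA1.2, A2, hA2.1, hA2.2, ?_⟩
    intro heq
    apply h12
    rw [(hshape A1 hA1.1 c hA1.2 hc).1, (hshape A2 hA2.1 c hA2.2 hc).1, heq]
  obtain ⟨A1, hA1E, hcA1, A2, hA2E, hcA2, hane⟩ := htwo c0 hc0T
  obtain ⟨B1, hB1E, hdB1, B2, hB2E, hdB2, hbne⟩ := htwo d0 hd0T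
  have wA1 := hwin A1 hA1E c0 hcA1 hc0T
  have wA2 := hwin A2 hA2E c0 hcA2 hc0T
  have wB1 := hwin B1 hB1E d0 hdB1 hd0T
  have wB2 := hwin B2 hB2E d0 hdB2 hd0T
  have h11 := hcross A1 hA1E B1 hB1E c0 d0 hcA1 hdB1 hc0T hd0T hc0d0
  have h12 := hcross A1 hA1E B2 hB2E c0 d0 hcA1 hdB2 hc0T hd0T hc0d0
  have h21 := hcross A2 hA2E B1 hB1E c0 d0 hcA2 hdB1 hc0T hd0T hc0d0
  have h22 := hcross A2 hA2E B2 hB2E c0 d0 hcA2 hdB2 hc0T hd0T hc0d0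
  obtain ⟨hD1, hb1or, hb2or⟩ :=
    lemV (t := T.card) wA1.1 wA1.2 wA2.1 wA2.2 wB1.1 wB1.2 wB2.1 wB2.2 hane hbne h11 h12 h21 h22
  -- trace classification
  have htrace : ∀ A ∈ E, ∀ c : Fin n, c ∈ A → c ∉ T → A ∩ T = A1 ∩ T ∨ A ∩ T = A2 ∩ T := by
    intro A hA c hcA hcT
    by_cases hcd : c = d0
    · subst hcd
      have k1 := hcross A hA A1 hA1E c c0 hcA hcA1 hcT hc0T (fun h => hc0d0 (h.symm))
      have k2 := hcross A hA A2 hA2E c c0 hcA hcA2 hcT hc0T (fun h => hc0d0 (h.symm))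
      exact lemU hD1 k1 k2
    · have k1 := hcross A hA B1 hB1E c d0 hcA hdB1 hcT hd0T hcd
      have k2 := hcross A hA B2 hB2E c d0 hcA hdB2 hcT hd0T hcd
      rcases hb1or with e1 | e1 <;> rcases hb2or with e2 | e2
      · exact absurd (e1.trans e2.symm) hbne
      · exact lemU hD1 (e1 ▸ k1) (e2 ▸ k2)
      · exact lemU hD1 (e2 ▸ k2) (e1 ▸ k1)
      · exact absurd (e1.trans e2.symm) hbne
  -- both traces realized at every outside column
  have hboth : ∀ c : Fin n, c ∉ T →
      insert c (A1 ∩ T) ∈ E ∧ insert c (A2 ∩ T) ∈ E := by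
    intro c hc
    obtain ⟨P1, hP1E, hcP1, P2, hP2E, hcP2, hpne⟩ := htwo c hc
    have s1 := (hshape P1 hP1E c hcP1 hc).1
    have s2 := (hshape P2 hP2E c hcP2 hc).1
    rcases htrace P1 hP1E c hcP1 hc with e1 | e1 <;>
      rcases htrace P2 hP2E c hcP2 hc with e2 | e2
    · exact absurd (e1.trans e2.symm) hpne
    · exact ⟨by rw [← e1, ← s1]; exact hP1E, by rw [← e2, ← s2]; exact hP2E⟩
    · exact ⟨by rw [← e2, ← s2]; exact hP2E, by rw [← e1, ← s1]; exact hP1E⟩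
    · exact absurd (e1.trans e2.symm) hpne
  -- filter characterization
  have hfiltc : ∀ c : Fin n, c ∉ T →
      E.filter (fun A => c ∈ A) = {insert c (A1 ∩ T), insert c (A2 ∩ T)} := by
    intro c hc
    ext A
    simp only [Finset.mem_filter, Finset.mem_insert, Finset.mem_singleton]
    constructor
    · rintro ⟨hA, hcA⟩
      have hs := (hshape A hA c hcA hc).1
      rcases htrace A hA c hcA hc with e | e
      · exact Or.inl (by rw [hs, e])
      · exact Or.inr (by rw [hs, e])
    · rintro (rfl | rfl)
      · exact ⟨(hboth c hc).1, Finset.mem_insert_self _ _⟩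
      · exact ⟨(hboth c hc).2, Finset.mem_insert_self _ _⟩
  -- orientation
  obtain ⟨q0, hq0⟩ := Finset.card_eq_one.mp hD1
  have hq0mem : q0 ∈ (A1 ∩ T) ∆ (A2 ∩ T) := hq0 ▸ Finset.mem_singleton_self q0
  rw [Finset.mem_symmDiff] at hq0mem
  have hins_of : ∀ x y : Finset (Fin n), x ∆ y = {q0} → q0 ∈ y → q0 ∉ x →
      y = insert q0 x := by
    intro x y hxy hq0y hq0x
    ext z
    simp only [Finset.mem_insert]
    constructor
    · intro hz
      by_cases hzx : z ∈ x
      · exact Or.inr hzx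
      · left
        have : z ∈ x ∆ y := Finset.mem_symmDiff.mpr (Or.inr ⟨hz, hzx⟩)
        rw [hxy] at this
        exact Finset.mem_singleton.mp this
    · rintro (rfl | hz)
      · exact hq0y
      · by_contra hzy
        have : z ∈ x ∆ y := Finset.mem_symmDiff.mpr (Or.inl ⟨hz, hzy⟩)
        rw [hxy] at this
        exact hq0x ((Finset.mem_singleton.mp this) ▸ hz)
  rcases hq0mem with ⟨hq0a1, hq0a2⟩ | ⟨hq0a2, hq0a1⟩
  · -- q0 ∈ A1∩T \ A2∩T : u := A2 ∩ T
    have hins : A1 ∩ T = insert q0 (A2 ∩ T) := by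
      apply hins_of (A2 ∩ T) (A1 ∩ T) _ hq0a1 hq0a2
      rw [symmDiff_comm, hq0]
    refine final_count hn E hempty hdist hge htv T ht2 ht3 (A2 ∩ T) q0
      Finset.inter_subset_right (Finset.mem_inter.mp hq0a1).2 hq0a2 ?_ ?_
    · have hc1 : (A1 ∩ T).card = (A2 ∩ T).card + 1 := by
        rw [hins, Finset.card_insert_of_notMem hq0a2]
      omega
    · intro c hc
      rw [hfiltc c hc, ← hins, Finset.pair_comm]
  · -- q0 ∈ A2∩T \ A1∩T : u := A1 ∩ T
    have hins : A2 ∩ T = insert q0 (A1 ∩ T) := by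
      apply hins_of (A1 ∩ T) (A2 ∩ T) hq0 hq0a2 hq0a1
    refine final_count hn E hempty hdist hge htv T ht2 ht3 (A1 ∩ T) q0
      Finset.inter_subset_right (Finset.mem_inter.mp hq0a2).2 hq0a1 ?_ ?_
    · have hc1 : (A2 ∩ T).card = (A1 ∩ T).card + 1 := by
        rw [hins, Finset.card_insert_of_notMem hq0a1]
      omega
    · intro c hc
      rw [hfiltc c hc, ← hins]

end Main

section Glue

lemma hamming_eq_filter {n : ℕ} (x y : Fin n → ZMod 2) :
    hammingDist x y = (Finset.univ.filter fun i => x i ≠ y i).card := rfl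

lemma zmod2_cases : ∀ a : ZMod 2, a = 0 ∨ a = 1 := by decide

lemma bound_unit {n : ℕ} (C : Finset (Fin n → ZMod 2)) (v : ZMod 2)
    (h1 : ∀ i : Fin n, (C.filter fun x => x i = v).card = 1) : C.card ≤ n + 1 := by
  classical
  have hsum : ∑ x ∈ C, (Finset.univ.filter fun i => x i = v).card = n := by
    have e1 : ∀ x ∈ C, (Finset.univ.filter fun i => x i = v).card
        = ∑ i : Fin n, if x i = v then 1 else 0 := by
      intro x _
      rw [Finset.card_filter]
    rw [Finset.sum_congr rfl e1, Finset.sum_comm]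
    have e2 : ∀ i : Fin n, (∑ x ∈ C, if x i = v then 1 else 0) = 1 := by
      intro i
      rw [← Finset.card_filter]
      exact h1 i
    rw [Finset.sum_congr rfl (fun i _ => e2 i)]
    simp
  have hsplit : (C.filter fun x => ∃ i, x i = v).card
      + (C.filter fun x => ¬ ∃ i, x i = v).card = C.card :=
    Finset.card_filter_add_card_filter_not _
  have hQ : (C.filter fun x => ¬ ∃ i, x i = v).card ≤ 1 := by
    apply Finset.card_le_one.mpr
    intro x hx y hy
    rw [Finset.mem_filter] at hx hy
    push_neg at hx hy
    have key : ∀ w a b : ZMod 2, a ≠ w → b ≠ w → a = b := by decide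
    funext i
    exact key v (x i) (y i) (hx.2 i) (hy.2 i)
  have hP : (C.filter fun x => ∃ i, x i = v).card ≤ n := by
    have step1 : (C.filter fun x => ∃ i, x i = v).card
        ≤ ∑ x ∈ C.filter (fun x => ∃ i, x i = v), (Finset.univ.filter fun i => x i = v).card := by
      rw [Finset.card_eq_sum_ones]
      apply Finset.sum_le_sum
      intro x hx
      rw [Finset.mem_filter] at hx
      obtain ⟨i, hi⟩ := hx.2
      exact Finset.card_pos.mpr ⟨i, Finset.mem_filter.mpr ⟨Finset.mem_univ i, hi⟩⟩
    have step2 : ∑ x ∈ C.filter (fun x => ∃ i, x i = v), (Finset.univ.filter fun i => x i = v).card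
        ≤ ∑ x ∈ C, (Finset.univ.filter fun i => x i = v).card :=
      Finset.sum_le_sum_of_subset (Finset.filter_subset _ _)
    exact le_trans step1 (le_trans step2 (le_of_eq hsum))
  calc C.card = (C.filter fun x => ∃ i, x i = v).card
      + (C.filter fun x => ¬ ∃ i, x i = v).card := hsplit.symm
    _ ≤ n + 1 := Nat.add_le_add hP hQ

end Glue

section Upper

lemma upper_bound {n : ℕ} (hn : 5 ≤ n) (C : Finset (Fin n → ZMod 2))
    (hC : Equireplicate n C)
    (hd : ∀ x ∈ C, ∀ y ∈ C, hammingDist x y ≤ 3) : C.card ≤ n + 1 := by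
  classical
  obtain ⟨r, hr⟩ := hC
  rcases C.eq_empty_or_nonempty with rfl | ⟨x0, hx0⟩
  · simp
  set M := C.card with hM
  have i0 : Fin n := ⟨0, by omega⟩
  have hrM : r ≤ M := by
    rw [← hr ⟨0, by omega⟩]
    exact Finset.card_filter_le _ _
  -- case r = 0
  by_cases hr0 : r = 0
  · have hzero : ∀ x ∈ C, ∀ i : Fin n, x i = 0 := by
      intro x hx i
      rcases zmod2_cases (x i) with h | h
      · exact h
      · exfalso
        have : x ∈ C.filter (fun y => y i = 1) := Finset.mem_filter.mpr ⟨hx, h⟩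
        have hc := hr i
        rw [hr0, Finset.card_eq_zero] at hc
        rw [hc] at this
        exact Finset.notMem_empty x this
    have : C.card ≤ 1 := Finset.card_le_one.mpr (by
      intro x hx y hy
      funext i
      rw [hzero x hx i, hzero y hy i])
    omega
  -- case r = M
  by_cases hrMeq : r = M
  · have hone : ∀ x ∈ C, ∀ i : Fin n, x i = 1 := by
      intro x hx i
      have hc := hr i
      rw [hrMeq] at hc
      have := Finset.eq_of_subset_of_card_le (Finset.filter_subset (fun y => y i = 1) C)
        (le_of_eq hc.symm)
      rw [← this] at hx
      exact (Finset.mem_filter.mp hx).2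
    have : C.card ≤ 1 := Finset.card_le_one.mpr (by
      intro x hx y hy
      funext i
      rw [hone x hx i, hone y hy i])
    omega
  -- case r = 1
  by_cases hr1 : r = 1
  · exact bound_unit C 1 (fun i => by rw [hr i, hr1])
  -- case r = M - 1
  by_cases hrM1 : r + 1 = M
  · apply bound_unit C 0
    intro i
    have hneg : C.filter (fun x => x i = 0) = C.filter (fun x => ¬ x i = 1) := by
      apply Finset.filter_congr
      intro x _
      have : ∀ a : ZMod 2, a = 0 ↔ ¬ a = 1 := by decide
      simp [this]
    have hsplit : (C.filter fun x => x i = 1).card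
        + (C.filter fun x => ¬ x i = 1).card = C.card :=
      Finset.card_filter_add_card_filter_not _
    rw [hneg]
    rw [hr i] at hsplit
    generalize hk : (C.filter fun x => ¬ x i = 1).card = k at hsplit ⊢
    clear hk hneg
    omega
  -- main case : 2 ≤ r and r + 2 ≤ M
  exfalso
  have hr2 : 2 ≤ r := by omega
  have hrM2 : r + 2 ≤ M := by omega
  set f : (Fin n → ZMod 2) → Finset (Fin n) :=
    fun y => Finset.univ.filter (fun i => y i ≠ x0 i) with hf
  have hinj : ∀ y y' : Fin n → ZMod 2, f y = f y' → y = y' := by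
    intro y y' h
    have key : ∀ c a b : ZMod 2, ((a ≠ c) ↔ (b ≠ c)) → a = b := by decide
    funext i
    apply key (x0 i)
    constructor
    · intro hy
      have : i ∈ f y := Finset.mem_filter.mpr ⟨Finset.mem_univ i, hy⟩
      rw [h] at this
      exact (Finset.mem_filter.mp this).2
    · intro hy
      have : i ∈ f y' := Finset.mem_filter.mpr ⟨Finset.mem_univ i, hy⟩
      rw [← h] at this
      exact (Finset.mem_filter.mp this).2
  set E : Finset (Finset (Fin n)) := C.image f with hE
  have hEcard : E.card = M := Finset.card_image_of_injective C (fun y y' => hinj y y')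
  have hempty : ∅ ∈ E := by
    rw [hE, Finset.mem_image]
    exact ⟨x0, hx0, by simp [hf]⟩
  have hcard3 : ∀ A ∈ E, A.card ≤ 3 := by
    intro A hA
    rw [hE, Finset.mem_image] at hA
    obtain ⟨y, hy, rfl⟩ := hA
    have : (f y).card = hammingDist y x0 := rfl
    rw [this]
    exact hd y hy x0 hx0
  have hsymm : ∀ y y' : Fin n → ZMod 2, (f y) ∆ (f y') =
      Finset.univ.filter (fun i => y i ≠ y' i) := by
    intro y y'
    ext i
    simp only [Finset.mem_symmDiff, Finset.mem_filter, Finset.mem_univ, true_and, hf]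
    have key : ∀ c a b : ZMod 2,
        ((a ≠ c ∧ ¬ b ≠ c) ∨ (b ≠ c ∧ ¬ a ≠ c)) ↔ a ≠ b := by decide
    exact key (x0 i) (y i) (y' i)
  have hdistE : ∀ A ∈ E, ∀ B ∈ E, (A ∆ B).card ≤ 3 := by
    intro A hA B hB
    rw [hE, Finset.mem_image] at hA hB
    obtain ⟨y, hy, rfl⟩ := hA
    obtain ⟨y', hy', rfl⟩ := hB
    rw [hsymm y y']
    exact hd y hy y' hy'
  have hcnt : ∀ i : Fin n, cnt E i = r ∨ cnt E i = M - r := by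
    intro i
    have hfilt : E.filter (fun A => i ∈ A) = (C.filter (fun y => y i ≠ x0 i)).image f := by
      ext A
      simp only [Finset.mem_filter, hE, Finset.mem_image]
      constructor
      · rintro ⟨⟨y, hy, rfl⟩, hiA⟩
        refine ⟨y, ⟨hy, ?_⟩, rfl⟩
        have := Finset.mem_filter.mp hiA
        exact this.2
      · rintro ⟨y, ⟨hy, hyi⟩, rfl⟩
        exact ⟨⟨y, hy, rfl⟩, Finset.mem_filter.mpr ⟨Finset.mem_univ i, hyi⟩⟩
    have hcnt_eq : cnt E i = (C.filter (fun y => y i ≠ x0 i)).card := by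
      rw [cnt, hfilt]
      exact Finset.card_image_of_injective _ (fun y y' => hinj y y')
    rcases zmod2_cases (x0 i) with h0 | h0
    · left
      rw [hcnt_eq, ← hr i]
      apply congrArg
      apply Finset.filter_congr
      intro y _
      rw [h0]
      have : ∀ a : ZMod 2, (a ≠ 0) ↔ a = 1 := by decide
      simp [this]
    · right
      rw [hcnt_eq]
      have hneg : C.filter (fun y => y i ≠ x0 i) = C.filter (fun y => ¬ y i = 1) := by
        apply Finset.filter_congr
        intro y _
        rw [h0]
      have hsplit : (C.filter fun y => y i = 1).card
          + (C.filter fun y => ¬ y i = 1).card = C.card :=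
        Finset.card_filter_add_card_filter_not _
      rw [hr i] at hsplit
      rw [hneg]
      generalize hk : (C.filter fun y => ¬ y i = 1).card = k at hsplit ⊢
      clear hk hneg hcnt_eq hfilt
      omega
  have hge : ∀ i : Fin n, 2 ≤ cnt E i := by
    intro i
    rcases hcnt i with h | h <;> omega
  have htv : ∀ i j : Fin n, cnt E i = cnt E j ∨ cnt E i + cnt E j = E.card := by
    intro i j
    rw [hEcard]
    rcases hcnt i with h | h <;> rcases hcnt j with h' | h'
    · exact Or.inl (h.trans h'.symm)
    · right; omega
    · right; omega
    · exact Or.inl (h.trans h'.symm)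
  exact main_lemma hn E hempty hcard3 hdistE hge htv

end Upper

section Constr

lemma construction {n : ℕ} (hn : 5 ≤ n) : (n + 1) ∈ equireplicateCodeSizes n 3 := by
  classical
  set e : Fin n → (Fin n → ZMod 2) := fun i => Pi.single i 1 with he
  set C : Finset (Fin n → ZMod 2) := insert 0 (Finset.univ.image e) with hC
  have h01 : (0 : ZMod 2) ≠ 1 := by decide
  have heval : ∀ i j, e i j = if j = i then 1 else 0 := fun i j => Pi.single_apply i 1 j
  have hmem_iff : ∀ x, x ∈ C ↔ x = 0 ∨ ∃ i, x = e i := by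
    intro x
    rw [hC]
    simp only [Finset.mem_insert, Finset.mem_image, Finset.mem_univ, true_and]
    constructor
    · rintro (rfl | ⟨i, hi⟩)
      · exact Or.inl rfl
      · exact Or.inr ⟨i, hi.symm⟩
    · rintro (rfl | ⟨i, hi⟩)
      · exact Or.inl rfl
      · exact Or.inr ⟨i, hi.symm⟩
  refine ⟨C, ⟨1, ?_⟩, ?_, ?_⟩
  · intro i
    have hfe : C.filter (fun x => x i = 1) = {e i} := by
      ext x
      simp only [Finset.mem_filter, Finset.mem_singleton]
      constructor
      · rintro ⟨hx, hxi⟩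
        rcases (hmem_iff x).mp hx with rfl | ⟨j, rfl⟩
        · simp only [Pi.zero_apply] at hxi
          exact absurd hxi h01
        · rw [heval j i] at hxi
          by_cases hji : i = j
          · rw [hji]
          · rw [if_neg hji] at hxi
            exact absurd hxi h01
      · rintro rfl
        refine ⟨(hmem_iff _).mpr (Or.inr ⟨i, rfl⟩), ?_⟩
        rw [heval i i, if_pos rfl]
    rw [hfe, Finset.card_singleton]
  · -- distances
    have hzero_e : ∀ i : Fin n, hammingDist (0 : Fin n → ZMod 2) (e i) ≤ 3 := by
      intro i
      rw [hamming_eq_filter]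
      have hsub : (Finset.univ.filter fun j => (0 : Fin n → ZMod 2) j ≠ e i j)
          ⊆ {i} := by
        intro j hj
        rw [Finset.mem_filter] at hj
        rw [Finset.mem_singleton]
        by_contra hji
        apply hj.2
        rw [Pi.zero_apply, heval i j, if_neg hji]
      calc (Finset.univ.filter fun j => (0 : Fin n → ZMod 2) j ≠ e i j).card
          ≤ ({i} : Finset (Fin n)).card := Finset.card_le_card hsub
        _ ≤ 3 := by rw [Finset.card_singleton]; omega
    have he_e : ∀ i k : Fin n, hammingDist (e i) (e k) ≤ 3 := by
      intro i k
      rw [hamming_eq_filter]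
      have hsub : (Finset.univ.filter fun j => e i j ≠ e k j)
          ⊆ {i, k} := by
        intro j hj
        rw [Finset.mem_filter] at hj
        simp only [Finset.mem_insert, Finset.mem_singleton]
        by_contra hjik
        push_neg at hjik
        apply hj.2
        rw [heval i j, heval k j, if_neg hjik.1, if_neg hjik.2]
      calc (Finset.univ.filter fun j => e i j ≠ e k j).card
          ≤ ({i, k} : Finset (Fin n)).card := Finset.card_le_card hsub
        _ ≤ 3 := by
            have h1 : ({i, k} : Finset (Fin n)).card ≤ ({k} : Finset (Fin n)).card + 1 :=
              Finset.card_insert_le i {k}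
            rw [Finset.card_singleton] at h1
            omega
    intro x hx y hy
    rcases (hmem_iff x).mp hx with rfl | ⟨i, rfl⟩ <;>
      rcases (hmem_iff y).mp hy with rfl | ⟨k, rfl⟩
    · rw [hammingDist_self]; omega
    · exact hzero_e k
    · rw [hammingDist_comm]; exact hzero_e i
    · exact he_e i k
  · -- card
    have hinj : Function.Injective e := by
      intro i j h
      by_contra hij
      have := congrFun h i
      rw [heval i i, heval j i, if_pos rfl, if_neg (fun hh => hij hh)] at this
      exact h01 this.symm
    have h0nm : (0 : Fin n → ZMod 2) ∉ Finset.univ.image e := by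
      rw [Finset.mem_image]
      rintro ⟨i, _, hi⟩
      have := congrFun hi i
      rw [heval i i, if_pos rfl] at this
      exact h01 this.symm
    rw [hC, Finset.card_insert_of_notMem h0nm, Finset.card_image_of_injective _ hinj,
      Finset.card_univ, Fintype.card_fin]

end Constr


theorem stmt_2 (n : ℕ) (hn : 5 ≤ n) :
    IsGreatest (equireplicateCodeSizes n 3) (n + 1) := by
  constructor
  · exact construction hn
  · rintro M ⟨C, hC, hd, rfl⟩
    exact upper_bound hn C hC hd
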